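/- If w is a doubling weight on ℝⁿ with doubling constant C_w < 3^{np} that satisfies the C_p condition (1 < p < ∞), then w is an A_∞ weight. -/

import Mathlib

open MeasureTheory ENNReal

structure Cube (n : ℕ) where
  c : Fin n → ℝ
  r : ℝ
  hr : 0 < r

namespace Cube

def set {n : ℕ} (I : Cube n) : Set (Fin n → ℝ) :=
  {x | ∀ i, I.c i - I.r ≤ x i ∧ x i < I.c i + I.r}

noncomputable def side {n : ℕ} (I : Cube n) : ℝ := 2 * I.r

noncomputable def vol {n : ℕ} (I : Cube n) : ℝ := (2 * I.r) ^ n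

def double {n : ℕ} (I : Cube n) : Cube n := ⟨I.c, 2 * I.r, by have := I.hr; linarith⟩

def triple {n : ℕ} (I : Cube n) : Cube n := ⟨I.c, 3 * I.r, by have := I.hr; linarith⟩

end Cube

noncomputable def poisson {n : ℕ} (I : Cube n) (ω : Measure (Fin n → ℝ)) : ℝ≥0∞ :=
  ∫⁻ x, (ENNReal.ofReal (I.side / (I.side + Metric.infDist x I.set) ^ 2)) ^ n ∂ω

noncomputable def maximal {n : ℕ} (μ : Measure (Fin n → ℝ)) (x : Fin n → ℝ) : ℝ≥0∞ :=
  ⨆ (I : Cube n) (_ : x ∈ I.set), μ I.set / ENNReal.ofReal I.vol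

noncomputable def wMass {n : ℕ} (w : (Fin n → ℝ) → ℝ≥0∞) (E : Set (Fin n → ℝ)) : ℝ≥0∞ :=
  ∫⁻ x in E, w x


/-- The weighted integral `∫ (M 1_I)^p w dx` appearing in the `C_p` condition. -/
noncomputable def maximalIntegral {n : ℕ} (w : (Fin n → ℝ) → ℝ≥0∞) (p : ℝ) (I : Cube n) : ℝ≥0∞ :=
  ∫⁻ x, (maximal (volume.restrict I.set) x) ^ p * w x

section Aux

lemma cube_set_eq {n : ℕ} (I : Cube n) :
    I.set = Set.univ.pi fun i => Set.Ico (I.c i - I.r) (I.c i + I.r) := by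
  ext x; simp [Cube.set, Set.mem_pi, Set.mem_Ico]

lemma cube_meas {n : ℕ} (I : Cube n) : MeasurableSet I.set := by
  rw [cube_set_eq]; exact MeasurableSet.univ_pi fun i => measurableSet_Ico

lemma cube_volume {n : ℕ} (I : Cube n) : volume I.set = ENNReal.ofReal I.vol := by
  rw [cube_set_eq, volume_pi_pi]
  have : ∀ i : Fin n, volume (Set.Ico (I.c i - I.r) (I.c i + I.r)) = ENNReal.ofReal (2 * I.r) := by
    intro i; rw [Real.volume_Ico]; ring_nf
  simp only [this, Finset.prod_const, Finset.card_univ, Fintype.card_fin]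
  rw [← ENNReal.ofReal_pow (by have := I.hr; linarith)]
  rfl

lemma maximal_le_one {n : ℕ} (I : Cube n) (x : Fin n → ℝ) :
    maximal (volume.restrict I.set) x ≤ 1 := by
  refine iSup₂_le fun J _ => ?_
  have h1 : (volume.restrict I.set) J.set ≤ ENNReal.ofReal J.vol := by
    rw [Measure.restrict_apply (cube_meas J)]
    exact (measure_mono Set.inter_subset_left).trans (cube_volume J).le
  exact (ENNReal.div_le_div_right h1 _).trans ENNReal.div_self_le_one

lemma maximal_far {n : ℕ} (I : Cube n) (k : ℕ) (x : Fin n → ℝ)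
    (hx : ∃ i, 3 ^ (k+1) * I.r ≤ |x i - I.c i|) :
    maximal (volume.restrict I.set) x ≤ ENNReal.ofReal ((((3:ℝ) ^ k)⁻¹) ^ n) := by
  obtain ⟨i, hi⟩ := hx
  have hr := I.hr
  have h3k : (0:ℝ) < 3 ^ k := by positivity
  refine iSup₂_le fun J hxJ => ?_
  rw [Measure.restrict_apply (cube_meas J)]
  rcases (J.set ∩ I.set).eq_empty_or_nonempty with he | ⟨y, hyJ, hyI⟩
  · simp [he]
  · have hs := J.hr
    have hxi := hxJ i
    have hyi := hyJ i
    have hyIi := hyI i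
    have hJr : 3 ^ k * I.r < J.r := by
      have h1 : |x i - y i| < 2 * J.r := by
        rw [abs_lt]; constructor <;> nlinarith [hxi.1, hxi.2, hyi.1, hyi.2]
      have h2 : 3 ^ (k+1) * I.r ≤ |x i - y i| + |y i - I.c i| := by
        calc 3 ^ (k+1) * I.r ≤ |x i - I.c i| := hi
        _ ≤ |x i - y i| + |y i - I.c i| := abs_sub_le _ _ _
      have h3 : |y i - I.c i| ≤ I.r := by rw [abs_le]; constructor <;> linarith [hyIi.1, hyIi.2]
      have hpow : (3:ℝ) ^ (k+1) = 3 * 3 ^ k := by ring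
      have h1k : (1:ℝ) ≤ 3 ^ k := one_le_pow₀ (by norm_num : (1:ℝ) ≤ 3)
      nlinarith
    have hnum : volume (J.set ∩ I.set) ≤ ENNReal.ofReal ((2 * I.r) ^ n) :=
      (measure_mono Set.inter_subset_right).trans (by rw [cube_volume]; rfl)
    have hden : ENNReal.ofReal ((2 * (3 ^ k * I.r)) ^ n) ≤ ENNReal.ofReal J.vol := by
      apply ENNReal.ofReal_le_ofReal
      apply pow_le_pow_left₀ (by positivity)
      linarith
    calc volume (J.set ∩ I.set) / ENNReal.ofReal J.vol
        ≤ ENNReal.ofReal ((2 * I.r) ^ n) / ENNReal.ofReal ((2 * (3 ^ k * I.r)) ^ n) :=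
          ENNReal.div_le_div hnum hden
      _ = ENNReal.ofReal ((2 * I.r) ^ n / (2 * (3 ^ k * I.r)) ^ n) := by
          rw [ENNReal.ofReal_div_of_pos (by positivity)]
      _ = ENNReal.ofReal ((((3:ℝ) ^ k)⁻¹) ^ n) := by
          congr 1
          rw [← div_pow]
          congr 1
          field_simp

/-- The `3^(k+1)`-fold dilate of a cube. -/
noncomputable def dil {n : ℕ} (I : Cube n) (k : ℕ) : Cube n :=
  ⟨I.c, 3 ^ (k+1) * I.r, by have := I.hr; positivity⟩

lemma dil_zero_set {n : ℕ} (I : Cube n) : (dil I 0).set = I.triple.set := by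
  simp only [Cube.set, dil, Cube.triple]
  norm_num

lemma dil_succ_set {n : ℕ} (I : Cube n) (k : ℕ) :
    (dil I (k+1)).set = (dil I k).triple.set := by
  simp only [Cube.set, dil, Cube.triple]
  ring_nf
  ext x; simp only [Set.mem_setOf_eq]
  constructor <;> intro h i <;> constructor <;> linarith [(h i).1, (h i).2]

lemma not_mem_dil {n : ℕ} (I : Cube n) (k : ℕ) (x : Fin n → ℝ)
    (hx : x ∉ (dil I k).set) : ∃ i, 3 ^ (k+1) * I.r ≤ |x i - I.c i| := by
  simp only [Cube.set, dil, Set.mem_setOf_eq, not_forall] at hx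
  obtain ⟨i, hi⟩ := hx
  refine ⟨i, ?_⟩
  rcases lt_or_ge (x i) (I.c i - 3 ^ (k+1) * I.r) with h | h
  · rw [abs_sub_comm, le_abs]; left; linarith
  · rw [le_abs]; left
    by_contra hcon
    push_neg at hcon
    exact hi ⟨h, by linarith⟩

lemma dil_cover {n : ℕ} (I : Cube n) (x : Fin n → ℝ) : ∃ k : ℕ, x ∈ (dil I k).set := by
  have hr := I.hr
  obtain ⟨k, hk⟩ := exists_nat_gt (dist x I.c / I.r)
  refine ⟨k, fun i => ?_⟩
  have h1 : |x i - I.c i| ≤ dist x I.c := by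
    rw [← Real.dist_eq]; exact dist_le_pi_dist x I.c i
  have h2 : dist x I.c < k * I.r := by
    rw [div_lt_iff₀ hr] at hk; linarith
  have h3 : (k : ℝ) < 3 ^ (k+1) := by
    calc (k : ℝ) < 2 ^ k := by exact_mod_cast (Nat.lt_two_pow_self (n := k))
    _ ≤ 3 ^ k := by apply pow_le_pow_left₀ <;> norm_num
    _ ≤ 3 ^ (k+1) := by apply pow_le_pow_right₀ (by norm_num); omega
  have h4 : |x i - I.c i| < 3 ^ (k+1) * I.r := by
    calc |x i - I.c i| ≤ dist x I.c := h1
    _ < k * I.r := h2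
    _ ≤ 3 ^ (k+1) * I.r := by nlinarith
  rw [abs_lt] at h4
  constructor
  · simp only [dil]; linarith [h4.1]
  · simp only [dil]; linarith [h4.2]

lemma wMass_mono {n : ℕ} (w : (Fin n → ℝ) → ℝ≥0∞) {s t : Set (Fin n → ℝ)} (h : s ⊆ t) :
    wMass w s ≤ wMass w t := lintegral_mono_set h

lemma wMass_dil {n : ℕ} (w : (Fin n → ℝ) → ℝ≥0∞) (Cw : ℝ)
    (hdoubling : ∀ I : Cube n, wMass w I.triple.set ≤ ENNReal.ofReal Cw * wMass w I.set)
    (I : Cube n) (k : ℕ) :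
    wMass w (dil I k).set ≤ ENNReal.ofReal Cw ^ (k+1) * wMass w I.set := by
  induction k with
  | zero =>
    rw [dil_zero_set, pow_one]
    exact hdoubling I
  | succ k ih =>
    rw [dil_succ_set]
    calc wMass w (dil I k).triple.set ≤ ENNReal.ofReal Cw * wMass w (dil I k).set :=
          hdoubling (dil I k)
      _ ≤ ENNReal.ofReal Cw * (ENNReal.ofReal Cw ^ (k+1) * wMass w I.set) :=
          mul_le_mul_right ih _
      _ = ENNReal.ofReal Cw ^ (k+2) * wMass w I.set := by ring

lemma rpow_key {n : ℕ} (p : ℝ) (hp : 0 ≤ p) (k : ℕ) :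
    ((((3:ℝ) ^ k)⁻¹) ^ n) ^ p = (((3:ℝ) ^ ((n:ℝ) * p))⁻¹) ^ k := by
  have h3 : (0:ℝ) < 3 := by norm_num
  have ha : (((3:ℝ) ^ k)⁻¹) ^ n = (3:ℝ) ^ (-((k * n : ℕ) : ℝ)) := by
    rw [Real.rpow_neg h3.le, Real.rpow_natCast, pow_mul, inv_pow]
  have hb : ((3:ℝ) ^ ((n:ℝ) * p))⁻¹ = (3:ℝ) ^ (-((n:ℝ) * p)) := by
    rw [Real.rpow_neg h3.le]
  rw [ha, hb, ← Real.rpow_natCast ((3:ℝ) ^ (-((n:ℝ) * p))) k,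
    ← Real.rpow_mul h3.le, ← Real.rpow_mul h3.le]
  congr 1
  push_cast
  ring

/-- Annuli decomposition. -/
noncomputable def ann {n : ℕ} (I : Cube n) : ℕ → Set (Fin n → ℝ)
  | 0 => (dil I 0).set
  | (k+1) => (dil I (k+1)).set \ (dil I k).set

set_option maxHeartbeats 1000000 in
/-- Main integral estimate: the `C_p` maximal integral is controlled by `wMass w I.set`. -/
lemma maximalIntegral_le {n : ℕ} (p : ℝ) (hp : 1 < p)
    (w : (Fin n → ℝ) → ℝ≥0∞) (hw : Measurable w) (Cw : ℝ)
    (hdoubling : ∀ I : Cube n, wMass w I.triple.set ≤ ENNReal.ofReal Cw * wMass w I.set)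
    (I : Cube n) :
    maximalIntegral w p I ≤
      (ENNReal.ofReal Cw +
        (∑' k : ℕ, ENNReal.ofReal (((3:ℝ) ^ ((n:ℝ) * p))⁻¹ * Cw) ^ k) *
          ENNReal.ofReal Cw ^ 2) * wMass w I.set := by
  have hp0 : (0:ℝ) ≤ p := by linarith
  set b : ℝ := ((3:ℝ) ^ ((n:ℝ) * p))⁻¹ with hbdef
  have hb0 : 0 ≤ b := by positivity
  -- decomposition of space
  set A : ℕ → Set (Fin n → ℝ) := ann I with hA
  have hA0 : A 0 = (dil I 0).set := rfl
  have hAs : ∀ k, A (k+1) = (dil I (k+1)).set \ (dil I k).set := fun k => rfl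
  have hcover : (⋃ k, A k) = Set.univ := by
    apply Set.eq_univ_of_forall
    intro x
    classical
    have hex : ∃ k, x ∈ (dil I k).set := dil_cover I x
    obtain ⟨k, hk, hmin⟩ : ∃ k, x ∈ (dil I k).set ∧ ∀ j < k, x ∉ (dil I j).set :=
      ⟨Nat.find hex, Nat.find_spec hex, fun j hj => Nat.find_min hex hj⟩
    rw [Set.mem_iUnion]
    cases k with
    | zero => exact ⟨0, hk⟩
    | succ k => exact ⟨k+1, hk, hmin k (Nat.lt_succ_self k)⟩
  -- term bounds
  set T : ℕ → ℝ≥0∞ := fun k => ∫⁻ x in A k, (maximal (volume.restrict I.set) x) ^ p * w x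
    with hT
  have hterm0 : ∫⁻ x in A 0, (maximal (volume.restrict I.set) x) ^ p * w x ≤
      ENNReal.ofReal Cw * wMass w I.set := by
      calc ∫⁻ x in A 0, (maximal (volume.restrict I.set) x) ^ p * w x
          ≤ ∫⁻ x in A 0, w x := by
            apply lintegral_mono
            intro x
            calc (maximal (volume.restrict I.set) x) ^ p * w x
                ≤ 1 ^ p * w x := by
                  gcongr
                  exact maximal_le_one I x
              _ = w x := by rw [ENNReal.one_rpow, one_mul]
        _ = wMass w (dil I 0).set := by rw [hA0]; rfl
        _ ≤ ENNReal.ofReal Cw ^ 1 * wMass w I.set := wMass_dil w Cw hdoubling I 0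
        _ = ENNReal.ofReal Cw * wMass w I.set := by rw [pow_one]
  have hterm1 : ∀ k : ℕ, ∫⁻ x in A (k+1), (maximal (volume.restrict I.set) x) ^ p * w x ≤
      ENNReal.ofReal (b * Cw) ^ k * (ENNReal.ofReal Cw ^ 2 * wMass w I.set) := by
    intro k
    have hbd : ∀ x ∈ A (k+1), (maximal (volume.restrict I.set) x) ^ p * w x ≤
        ENNReal.ofReal (b ^ k) * w x := by
      intro x hx
      rw [hAs] at hx
      have hM := maximal_far I k x (not_mem_dil I k x hx.2)
      calc (maximal (volume.restrict I.set) x) ^ p * w x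
          ≤ (ENNReal.ofReal ((((3:ℝ) ^ k)⁻¹) ^ n)) ^ p * w x := by
            gcongr
        _ = ENNReal.ofReal (b ^ k) * w x := by
            rw [ENNReal.ofReal_rpow_of_nonneg (by positivity) hp0, rpow_key p hp0 k]
    calc ∫⁻ x in A (k+1), (maximal (volume.restrict I.set) x) ^ p * w x
        ≤ ∫⁻ x in A (k+1), ENNReal.ofReal (b ^ k) * w x :=
          setLIntegral_mono (by fun_prop) hbd
      _ = ENNReal.ofReal (b ^ k) * ∫⁻ x in A (k+1), w x := lintegral_const_mul _ hw
      _ ≤ ENNReal.ofReal (b ^ k) * wMass w (dil I (k+1)).set := by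
          gcongr
          exact wMass_mono w (by rw [hAs]; exact Set.diff_subset)
      _ ≤ ENNReal.ofReal (b ^ k) * (ENNReal.ofReal Cw ^ (k+2) * wMass w I.set) := by
          gcongr
          exact wMass_dil w Cw hdoubling I (k+1)
      _ = ENNReal.ofReal (b * Cw) ^ k * (ENNReal.ofReal Cw ^ 2 * wMass w I.set) := by
          rw [ENNReal.ofReal_mul hb0, ENNReal.ofReal_pow hb0, mul_pow]
          ring
  -- assemble
  calc maximalIntegral w p I
      = ∫⁻ x in ⋃ k, A k, (maximal (volume.restrict I.set) x) ^ p * w x := by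
        rw [maximalIntegral]
        rw [← setLIntegral_univ]
        rw [← hcover]
    _ ≤ ∑' k : ℕ, T k := lintegral_iUnion_le _ _
    _ = T 0 + ∑' k : ℕ, T (k+1) := tsum_eq_zero_add' ENNReal.summable
    _ ≤ ENNReal.ofReal Cw * wMass w I.set +
        ∑' k : ℕ, ENNReal.ofReal (b * Cw) ^ k * (ENNReal.ofReal Cw ^ 2 * wMass w I.set) :=
        add_le_add hterm0 (ENNReal.tsum_le_tsum hterm1)
    _ = (ENNReal.ofReal Cw + (∑' k : ℕ, ENNReal.ofReal (b * Cw) ^ k) *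
          ENNReal.ofReal Cw ^ 2) * wMass w I.set := by
        rw [ENNReal.tsum_mul_right, add_mul, mul_assoc]

end Aux

/-- If `w` is a doubling weight on `ℝⁿ` with doubling constant `C_w < 3^{np}`
that satisfies the `C_p` condition (`1 < p < ∞`), then `w` is an `A_∞` weight. -/
theorem stmt_0 (n : ℕ) (hn : 0 < n) (p : ℝ) (hp : 1 < p)
    (w : (Fin n → ℝ) → ℝ≥0∞) (hw : Measurable w)
    (hloc : ∀ I : Cube n, wMass w I.set < ⊤)
    (Cw : ℝ) (hCw : 0 < Cw) (hCwsmall : Cw < (3 : ℝ) ^ ((n : ℝ) * p))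
    (hdoubling : ∀ I : Cube n, wMass w I.triple.set ≤ ENNReal.ofReal Cw * wMass w I.set)
    (hCp : ∃ C > (0:ℝ), ∃ ε > (0:ℝ), ∀ I : Cube n,
      maximalIntegral w p I < ⊤ →
      ∀ E : Set (Fin n → ℝ), E ⊆ I.set → IsCompact E →
        wMass w E ≤ ENNReal.ofReal (C * ((volume E).toReal / I.vol) ^ ε) *
          maximalIntegral w p I) :
    ∃ C > (0:ℝ), ∃ ε > (0:ℝ), ∀ I : Cube n, ∀ E : Set (Fin n → ℝ),
      E ⊆ I.set → MeasurableSet E →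
      wMass w E ≤ ENNReal.ofReal (C * ((volume E).toReal / I.vol) ^ ε) * wMass w I.set := by
  obtain ⟨C, hC, ε, hε, H⟩ := hCp
  set b : ℝ := ((3:ℝ) ^ ((n:ℝ) * p))⁻¹ with hbdef
  have h3np : (0:ℝ) < (3:ℝ) ^ ((n:ℝ) * p) := Real.rpow_pos_of_pos (by norm_num) _
  have hb0 : 0 < b := by positivity
  have hbCw : b * Cw < 1 := by
    have := (mul_lt_mul_of_pos_left hCwsmall hb0)
    rwa [inv_mul_cancel₀ h3np.ne'] at this
  set K : ℝ≥0∞ := ENNReal.ofReal Cw +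
    (∑' k : ℕ, ENNReal.ofReal (b * Cw) ^ k) * ENNReal.ofReal Cw ^ 2 with hKdef
  have hgeo : (∑' k : ℕ, ENNReal.ofReal (b * Cw) ^ k) = (1 - ENNReal.ofReal (b * Cw))⁻¹ :=
    ENNReal.tsum_geometric _
  have hqlt : ENNReal.ofReal (b * Cw) < 1 := by
    rw [← ENNReal.ofReal_one]
    exact ENNReal.ofReal_lt_ofReal_iff_of_nonneg (by positivity) |>.2 hbCw
  have hgeo_ne : (∑' k : ℕ, ENNReal.ofReal (b * Cw) ^ k) ≠ ⊤ := by
    rw [hgeo]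
    apply ENNReal.inv_ne_top.2
    rw [ne_eq, tsub_eq_zero_iff_le]
    exact fun h => absurd (lt_of_lt_of_le hqlt h) (lt_irrefl _)
  have hKne : K ≠ ⊤ := by
    rw [hKdef]
    apply ENNReal.add_ne_top.2
    constructor
    · exact ENNReal.ofReal_ne_top
    · exact ENNReal.mul_ne_top hgeo_ne (by simp [ENNReal.pow_ne_top])
  have hKpos : 0 < K.toReal := by
    apply ENNReal.toReal_pos _ hKne
    have h1 : (0:ℝ≥0∞) < ENNReal.ofReal Cw := ENNReal.ofReal_pos.2 hCw
    have h2 : ENNReal.ofReal Cw ≤ K := le_self_add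
    exact (h1.trans_le h2).ne'
  refine ⟨C * K.toReal, by positivity, ε, hε, fun I E hEI hEmeas => ?_⟩
  -- the weighted measure
  set μ : Measure (Fin n → ℝ) := volume.withDensity w with hμdef
  have hμ_apply : ∀ s : Set (Fin n → ℝ), MeasurableSet s → μ s = wMass w s := fun s hs =>
    withDensity_apply w hs
  haveI : SigmaFinite μ := by
    refine ⟨⟨⟨fun k => (dil ⟨0, 1, one_pos⟩ k).set, fun _ => trivial, fun k => ?_, ?_⟩⟩⟩
    · rw [hμ_apply _ (cube_meas _)]
      exact hloc _
    · apply Set.eq_univ_of_forall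
      intro x
      rw [Set.mem_iUnion]
      exact dil_cover _ x
  have hIfin : wMass w I.set ≠ ⊤ := (hloc I).ne
  have hMIlt : maximalIntegral w p I < ⊤ := by
    apply lt_of_le_of_lt (maximalIntegral_le p hp w hw Cw hdoubling I)
    exact ENNReal.mul_lt_top hKne.lt_top (hloc I)
  have hEfin : μ E ≠ ⊤ := by
    rw [hμ_apply E hEmeas]
    exact ((wMass_mono w hEI).trans_lt (hloc I)).ne
  have hvolE : volume E ≠ ⊤ := by
    refine ((measure_mono hEI).trans_lt ?_).ne
    rw [cube_volume]
    exact ENNReal.ofReal_lt_top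
  have hIvol : 0 < I.vol := by
    have := I.hr
    simp only [Cube.vol]
    positivity
  rw [← hμ_apply E hEmeas, hEmeas.measure_eq_iSup_isCompact_of_ne_top hEfin]
  refine iSup_le fun Kc => iSup_le fun hKcE => iSup_le fun hKc => ?_
  have hKcmeas : MeasurableSet Kc := hKc.isClosed.measurableSet
  rw [hμ_apply Kc hKcmeas]
  have h1 : wMass w Kc ≤ ENNReal.ofReal (C * ((volume Kc).toReal / I.vol) ^ ε) *
      maximalIntegral w p I := H I hMIlt Kc (hKcE.trans hEI) hKc
  have hKE : (volume Kc).toReal ≤ (volume E).toReal :=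
    ENNReal.toReal_mono hvolE (measure_mono hKcE)
  have hratio : C * ((volume Kc).toReal / I.vol) ^ ε ≤ C * ((volume E).toReal / I.vol) ^ ε := by
    apply mul_le_mul_of_nonneg_left _ hC.le
    apply Real.rpow_le_rpow (by positivity) _ hε.le
    gcongr
  calc wMass w Kc
      ≤ ENNReal.ofReal (C * ((volume Kc).toReal / I.vol) ^ ε) * maximalIntegral w p I := h1
    _ ≤ ENNReal.ofReal (C * ((volume E).toReal / I.vol) ^ ε) * (K * wMass w I.set) :=
        mul_le_mul' (ENNReal.ofReal_le_ofReal hratio)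
          (maximalIntegral_le p hp w hw Cw hdoubling I)
    _ = ENNReal.ofReal (C * ((volume E).toReal / I.vol) ^ ε) * ENNReal.ofReal K.toReal *
          wMass w I.set := by rw [ENNReal.ofReal_toReal hKne, mul_assoc]
    _ = ENNReal.ofReal (C * K.toReal * ((volume E).toReal / I.vol) ^ ε) * wMass w I.set := by
        rw [← ENNReal.ofReal_mul (by positivity)]
        congr 2
        ring
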